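/- The number of lattice paths from (0,0) to (p,q) with steps ±1 that never return to height 0 after time 0 equals (q/p) · C(p, (p+q)/2), for integers p ≥ 1 and q > 0 with p + q even. -/

import Mathlib

def pathSet (p : ℕ) (t : ℤ) : Type :=
  {h : Fin (p + 1) → ℤ //
        h 0 = 0 ∧ h (Fin.last p) = t ∧
        (∀ i : Fin p, |h i.succ - h i.castSucc| = 1) ∧
        ∀ i : Fin (p + 1), 1 ≤ (i : ℕ) → h i ≠ 0}

def pathRestrict {p : ℕ} {t : ℤ} (a : pathSet (p + 1) t) (s : ℤ)
    (hsend : a.1 ((Fin.last p).castSucc) = s) : pathSet p s := by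
  obtain ⟨h, h0, hl, hs, hz⟩ := a
  refine ⟨Fin.init h, ?_, ?_, ?_, ?_⟩
  · simpa [Fin.init] using h0
  · exact hsend
  · intro i
    have := hs i.castSucc
    simpa only [Fin.init, Fin.succ_castSucc] using this
  · intro i hi
    have := hz i.castSucc (by simpa using hi)
    simpa [Fin.init] using this

def pathExtend {p : ℕ} {s : ℤ} (b : pathSet p s) (t : ℤ) (hst : |t - s| = 1)
    (ht : t ≠ 0) : pathSet (p + 1) t := by
  obtain ⟨g, g0, gl, gs, gz⟩ := b
  refine ⟨Fin.snoc g t, ?_, ?_, ?_, ?_⟩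
  · rw [show (0 : Fin (p+2)) = Fin.castSucc 0 by simp, Fin.snoc_castSucc, g0]
  · exact Fin.snoc_last _ _
  · intro i
    induction i using Fin.lastCases with
    | last =>
      rw [Fin.succ_last, Fin.snoc_last, Fin.snoc_castSucc, gl]
      exact hst
    | cast j =>
      rw [Fin.succ_castSucc, Fin.snoc_castSucc, Fin.snoc_castSucc]
      exact gs j
  · intro i hi
    induction i using Fin.lastCases with
    | last => rw [Fin.snoc_last]; exact ht
    | cast j =>
      rw [Fin.snoc_castSucc]
      exact gz j (by simpa using hi)

@[simp] lemma pathRestrict_val {p : ℕ} {t : ℤ} (a : pathSet (p + 1) t) (s : ℤ)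
    (hsend : a.1 ((Fin.last p).castSucc) = s) :
    (pathRestrict a s hsend).1 = Fin.init a.1 := by
  obtain ⟨h, h0, hl, hs, hz⟩ := a; rfl

@[simp] lemma pathExtend_val {p : ℕ} {s : ℤ} (b : pathSet p s) (t : ℤ)
    (hst : |t - s| = 1) (ht : t ≠ 0) :
    (pathExtend b t hst ht).1 = Fin.snoc b.1 t := by
  obtain ⟨g, g0, gl, gs, gz⟩ := b; rfl

lemma last_step {p : ℕ} {t : ℤ} (a : pathSet (p + 1) t) :
    a.1 ((Fin.last p).castSucc) = t - 1 ∨ a.1 ((Fin.last p).castSucc) = t + 1 := by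
  have hstep := a.2.2.2.1 (Fin.last p)
  rw [Fin.succ_last, a.2.2.1] at hstep
  rcases (abs_eq (by norm_num : (0:ℤ) ≤ 1)).1 hstep with h1 | h1 <;> omega

noncomputable def pathRecEquiv (p : ℕ) (t : ℤ) (ht : t ≠ 0) :
    pathSet (p + 1) t ≃ pathSet p (t - 1) ⊕ pathSet p (t + 1) where
  toFun a :=
    if hc : a.1 ((Fin.last p).castSucc) = t - 1 then Sum.inl (pathRestrict a _ hc)
    else Sum.inr (pathRestrict a _ ((last_step a).resolve_left hc))
  invFun b := Sum.elim
    (fun b => pathExtend b t (by simp) ht)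
    (fun b => pathExtend b t (by rw [show t - (t+1) = -1 by ring]; simp) ht) b
  left_inv a := by
    have hl : a.1 (Fin.last (p + 1)) = t := a.2.2.1
    dsimp only
    split_ifs with hc <;>
    · apply Subtype.ext
      simp only [Sum.elim_inl, Sum.elim_inr, pathExtend_val, pathRestrict_val]
      calc Fin.snoc (Fin.init a.1) t = Fin.snoc (Fin.init a.1) (a.1 (Fin.last (p+1))) := by
            rw [hl]
        _ = a.1 := Fin.snoc_init_self a.1
  right_inv b := by
    dsimp only
    rcases b with b | b
    · have hend : b.1 (Fin.last p) = t - 1 := b.2.2.1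
      simp only [Sum.elim_inl]
      split_ifs with hc
      · refine (dif_pos hc).trans ?_
        apply congrArg Sum.inl; apply Subtype.ext; simp
      · exfalso; apply hc; simp only [pathExtend_val, Fin.snoc_castSucc, hend]
    · have hend : b.1 (Fin.last p) = t + 1 := b.2.2.1
      simp only [Sum.elim_inr]
      split_ifs with hc
      · exfalso; simp only [pathExtend_val, Fin.snoc_castSucc, hend] at hc; omega
      · refine (dif_neg hc).trans ?_
        apply congrArg Sum.inr; apply Subtype.ext; simp

instance pathSet.finite (p : ℕ) (t : ℤ) : Finite (pathSet p t) := by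
  have : Function.Injective (fun (h : pathSet p t) (i : Fin p) =>
      decide (h.1 i.succ = h.1 i.castSucc + 1)) := by
    intro a b hfg
    obtain ⟨h, h0, hl, hs, hz⟩ := a
    obtain ⟨g, g0, gl, gs, gz⟩ := b
    simp only [funext_iff, decide_eq_decide] at hfg
    suffices hgoal : ∀ i, h i = g i from Subtype.ext (funext hgoal)
    intro i
    induction i using Fin.induction with
    | zero => rw [h0, g0]
    | succ j ih =>
      rcases (abs_eq (by norm_num : (0:ℤ) ≤ 1)).1 (hs j) with h1 | h1 <;>
      rcases (abs_eq (by norm_num : (0:ℤ) ≤ 1)).1 (gs j) with g1 | g1 <;>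
      · have := hfg j
        omega
  exact Finite.of_injective _ this

lemma card_rec (p : ℕ) (t : ℤ) (ht : t ≠ 0) :
    Nat.card (pathSet (p + 1) t) =
      Nat.card (pathSet p (t - 1)) + Nat.card (pathSet p (t + 1)) := by
  rw [Nat.card_congr (pathRecEquiv p t ht), Nat.card_sum]

lemma card_len_zero (t : ℤ) : Nat.card (pathSet 0 t) = if t = 0 then 1 else 0 := by
  split_ifs with h
  · subst h
    haveI : Unique (pathSet 0 0) :=
      { default := ⟨fun _ => 0, rfl, rfl, fun i => i.elim0, fun i hi =>
          absurd hi (by have := i.isLt; omega)⟩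
        uniq := fun a => Subtype.ext (funext fun i => by
          rw [show i = 0 from Fin.ext (by have := i.isLt; omega), a.2.1]) }
    exact Nat.card_unique
  · haveI : IsEmpty (pathSet 0 t) := ⟨fun a => by
      have h1 := a.2.1
      have h2 := a.2.2.1
      have h3 : (Fin.last 0 : Fin 1) = 0 := Fin.ext (by simp)
      exact h (((congrArg a.1 h3).symm.trans h2).symm.trans h1)⟩
    exact Nat.card_of_isEmpty

lemma card_end_zero (p : ℕ) (hp : 1 ≤ p) : Nat.card (pathSet p 0) = 0 := by
  haveI : IsEmpty (pathSet p 0) := ⟨fun a => by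
    have := a.2.2.2.2 (Fin.last p) (by simp [Fin.last]; omega)
    exact this a.2.2.1⟩
  exact Nat.card_of_isEmpty

def ballotF : ℕ → ℕ → ℕ
  | 0, q => if q = 0 then 1 else 0
  | p + 1, q => if q = 0 then 0 else ballotF p (q - 1) + ballotF p (q + 1)

lemma card_eq_ballotF (p q : ℕ) : Nat.card (pathSet p (q : ℤ)) = ballotF p q := by
  induction p generalizing q with
  | zero =>
    rw [card_len_zero]
    simp [ballotF]
  | succ p ih =>
    rcases Nat.eq_zero_or_pos q with rfl | hq
    · rw [Nat.cast_zero, card_end_zero _ (Nat.succ_le_succ (Nat.zero_le p))]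
      simp [ballotF]
    · have h1 : ((q : ℤ)) ≠ 0 := by omega
      rw [card_rec p _ h1,
        show (q : ℤ) - 1 = ((q - 1 : ℕ) : ℤ) by omega,
        show (q : ℤ) + 1 = ((q + 1 : ℕ) : ℤ) by omega, ih, ih]
      simp [ballotF, Nat.pos_iff_ne_zero.mp hq]
lemma key_choose (p k : ℕ) (hk : 1 ≤ k) :
    ((p : ℚ) + 1 - k) * p.choose (k - 1) = k * p.choose k := by
  rcases le_or_gt k (p + 1) with h | h
  · have h1 := Nat.choose_succ_right_eq p (k - 1)
    rw [Nat.sub_add_cancel hk] at h1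
    have hcast : ((p.choose k : ℚ)) * k = (p.choose (k - 1) : ℚ) * ((p - (k - 1) : ℕ) : ℚ) := by
      exact_mod_cast congrArg (Nat.cast (R := ℚ)) h1
    have h2 : ((p - (k - 1) : ℕ) : ℚ) = (p : ℚ) + 1 - k := by
      rw [Nat.cast_sub (by omega), Nat.cast_sub hk]
      push_cast
      ring
    rw [h2] at hcast
    linarith
  · rw [Nat.choose_eq_zero_of_lt (by omega), Nat.choose_eq_zero_of_lt (by omega)]
    push_cast
    ring

lemma ballotF_formula (p : ℕ) (hp : 1 ≤ p) (q : ℕ) :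
    (ballotF p q : ℚ) =
      if Even (p + q) then ((q : ℚ) / p) * (p.choose ((p + q) / 2) : ℚ) else 0 := by
  induction p, hp using Nat.le_induction generalizing q with
  | base =>
    match q with
    | 0 => simp [ballotF]
    | 1 => norm_num [ballotF]
    | (n + 2) =>
      have hb : ballotF 1 (n + 2) = 0 := by simp [ballotF]
      rw [hb]
      split_ifs with he
      · obtain ⟨m, hm⟩ := he
        rw [Nat.choose_eq_zero_of_lt (by omega)]
        simp
      · simp
  | succ p hp ih =>
    rcases Nat.eq_zero_or_pos q with rfl | hq
    · simp [ballotF]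
    · have hfq : (ballotF (p + 1) q : ℚ) = (ballotF p (q - 1) : ℚ) + (ballotF p (q + 1) : ℚ) := by
        rw [show ballotF (p + 1) q = ballotF p (q - 1) + ballotF p (q + 1) by
          simp [ballotF, Nat.pos_iff_ne_zero.mp hq]]
        push_cast
        ring
      rw [hfq, ih, ih]
      rcases Nat.even_or_odd (p + 1 + q) with he | ho
      · obtain ⟨k, hk⟩ := he
        have he1 : Even (p + (q - 1)) := ⟨k - 1, by omega⟩
        have he2 : Even (p + (q + 1)) := ⟨k, by omega⟩
        rw [if_pos he1, if_pos he2, if_pos ⟨k, hk⟩]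
        have e1 : (p + (q - 1)) / 2 = k - 1 := by omega
        have e2 : (p + (q + 1)) / 2 = k := by omega
        have e3 : (p + 1 + q) / 2 = k := by omega
        rw [e1, e2, e3]
        have hk1 : 1 ≤ k := by omega
        have hkk : k - 1 + 1 = k := by omega
        have pascal : ((p + 1).choose k : ℚ) = (p.choose (k - 1) : ℚ) + (p.choose k : ℚ) := by
          have hpas : (p + 1).choose k = p.choose (k - 1) + p.choose k := by
            conv_lhs => rw [← hkk]
            rw [Nat.choose_succ_succ, Nat.succ_eq_add_one, hkk]
          exact_mod_cast congrArg (Nat.cast (R := ℚ)) hpas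
        have key := key_choose p k hk1
        have hkQ : (p : ℚ) + 1 + q = k + k := by exact_mod_cast hk
        have hq' : ((q : ℚ)) = 2 * k - p - 1 := by linarith
        have hqc : ((q - 1 : ℕ) : ℚ) = (q : ℚ) - 1 := by
          rw [Nat.cast_sub hq]
          norm_num
        have hp0 : (p : ℚ) ≠ 0 := Nat.cast_ne_zero.mpr (by omega)
        have hp1 : (p : ℚ) + 1 ≠ 0 := by positivity
        rw [hqc, pascal]
        push_cast
        rw [hq']
        field_simp
        linear_combination (-2 : ℚ) * key
      · have ho1 : ¬ Even (p + (q - 1)) := by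
          rcases ho with ⟨k, hk⟩
          rintro ⟨m, hm⟩
          omega
        have ho2 : ¬ Even (p + (q + 1)) := by
          rcases ho with ⟨k, hk⟩
          rintro ⟨m, hm⟩
          omega
        have ho3 : ¬ Even (p + 1 + q) := by
          rcases ho with ⟨k, hk⟩
          rintro ⟨m, hm⟩
          omega
        rw [if_neg ho1, if_neg ho2, if_neg ho3]
        norm_num

/-- The number of ±1-step lattice paths from (0,0) to (p,q), q > 0, that never
return to height 0 after time 0, equals (q/p)·C(p, (p+q)/2), for p ≥ 1 and
p + q even. -/
theorem ballot_path_count (p q : ℕ) (hp : 1 ≤ p) (hq : 0 < q) (hpq : Even (p + q)) :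
    (Nat.card {h : Fin (p + 1) → ℤ //
        h 0 = 0 ∧ h (Fin.last p) = (q : ℤ) ∧
        (∀ i : Fin p, |h i.succ - h i.castSucc| = 1) ∧
        ∀ i : Fin (p + 1), 1 ≤ (i : ℕ) → h i ≠ 0} : ℚ)
      = ((q : ℚ) / (p : ℚ)) * (p.choose ((p + q) / 2) : ℚ) := by
  have h1 : Nat.card (pathSet p (q : ℤ)) = ballotF p q := card_eq_ballotF p q
  have h2 := ballotF_formula p hp q
  rw [if_pos hpq] at h2
  show ((Nat.card (pathSet p (q : ℤ)) : ℚ)) = _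
  rw [h1]
  exact h2
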